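/- Every balanced, ρ-uniform 0/1-polytope P ⊆ ℝ^d has fractional wall-matchings. -/

import Mathlib

open scoped Classical

noncomputable section

/-- All points of `X` are 0/1-vectors. -/
def IsZeroOne {ι : Type*} (X : Finset (ι → ℝ)) : Prop :=
  ∀ x ∈ X, ∀ i, x i = 0 ∨ x i = 1

/-- Two vertices `u v` of the 0/1-polytope `P = conv X` are adjacent iff they are
distinct and there is a linear functional whose maximum over `P` is attained
exactly on the segment `[u, v]`. -/
def PolytopeAdj {ι : Type*} [Fintype ι] (X : Finset (ι → ℝ)) (u v : ι → ℝ) : Prop :=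
  u ∈ X ∧ v ∈ X ∧ u ≠ v ∧ ∃ (f : (ι → ℝ) →ₗ[ℝ] ℝ) (c : ℝ),
    (∀ x ∈ convexHull ℝ (X : Set (ι → ℝ)), f x ≤ c) ∧
    {x ∈ convexHull ℝ (X : Set (ι → ℝ)) | f x = c} = segment ℝ u v

/-- The graph `G(P)` of the 0/1-polytope `P = conv X`, on the vertex set `X`. -/
def polytopeGraph {ι : Type*} [Fintype ι] (X : Finset (ι → ℝ)) :
    SimpleGraph {x // x ∈ X} where
  Adj u v := PolytopeAdj X u.1 v.1
  symm := by
    constructor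
    rintro u v ⟨hu, hv, hne, f, c, h1, h2⟩
    exact ⟨hv, hu, hne.symm, f, c, h1, by rw [h2, segment_symm]⟩
  loopless := by constructor; rintro u ⟨_, _, hne, _⟩; exact hne rfl
/-- A wall of the 0/1-polytope with vertex set `X`: a nonempty set of vertices
obtained by intersecting `X` with a face of the 0/1-cube, given by a sign vector
`σ ∈ {0,1,⋆}^ι` (encoded as `ι → Option Bool`, `none` being `⋆`). -/
def IsWall {ι : Type*} (X : Finset (ι → ℝ)) (W : Set (ι → ℝ)) : Prop :=
  W.Nonempty ∧ ∃ σ : ι → Option Bool,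
    W = {x | x ∈ X ∧ ∀ i, ∀ b, σ i = some b → x i = (if b then (1 : ℝ) else 0)}

/-- `σ(W)ᵢ = ⋆`, i.e. the points of `W` do not all agree in coordinate `i`. -/
def IsStarCoord {ι : Type*} (W : Set (ι → ℝ)) (i : ι) : Prop :=
  ∃ x ∈ W, ∃ y ∈ W, x i ≠ y i
/-- `μ` is the smallest coordinate in which the points of `W` disagree,
i.e. `μ = μ(W)`. -/
def IsLeastStar {ι : Type*} [LinearOrder ι] (W : Set (ι → ℝ)) (μ : ι) : Prop :=
  IsStarCoord W μ ∧ ∀ j, j < μ → ¬ IsStarCoord W j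

/-- `(u, v)` is an edge of the bipartite graph `B(W)` (with `μ = μ(W)`),
oriented from the part `W₀` to the part `W₁`. -/
def WallBipAdj {ι : Type*} [Fintype ι] (X : Finset (ι → ℝ)) (W : Set (ι → ℝ))
    (μ : ι) (u v : ι → ℝ) : Prop :=
  PolytopeAdj X u v ∧ u ∈ W ∧ v ∈ W ∧ u μ = 0 ∧ v μ = 1

/-- The bipartite graph `B(W)` (with `μ = μ(W)`, parts `W₀` and `W₁`) has a
fractional matching: nonnegative weights on its edges such that every node of
`W₀` has weighted degree `1/|W₀|` and every node of `W₁` has weighted degree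
`1/|W₁|`. -/
def HasFracMatching {ι : Type*} [Fintype ι] (X : Finset (ι → ℝ)) (W : Set (ι → ℝ))
    (μ : ι) : Prop :=
  ∃ w : (ι → ℝ) → (ι → ℝ) → ℚ,
    (∀ u v, 0 ≤ w u v) ∧
    (∀ u v, w u v ≠ 0 → WallBipAdj X W μ u v) ∧
    (∀ u ∈ W, u μ = 0 → ∑ v ∈ X, w u v = 1 / ({x ∈ W | x μ = 0}.ncard : ℚ)) ∧
    (∀ v ∈ W, v μ = 1 → ∑ u ∈ X, w u v = 1 / ({x ∈ W | x μ = 1}.ncard : ℚ))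

/-- The 0/1-polytope with vertex set `X` has fractional wall-matchings: for every
wall `W` with at least two points (equivalently, with a least star coordinate
`μ(W)`), the bipartite graph `B(W)` has a fractional matching. -/
def HasFractionalWallMatchings {ι : Type*} [Fintype ι] [LinearOrder ι]
    (X : Finset (ι → ℝ)) : Prop :=
  ∀ W : Set (ι → ℝ), IsWall X W → ∀ μ : ι, IsLeastStar W μ → HasFracMatching X W μ
/-- `P = conv X` is `ρ`-uniform: every vertex has exactly `ρ` coordinates equal
to one. -/
def IsUniform {ι : Type*} (X : Finset (ι → ℝ)) (ρ : ℕ) : Prop :=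
  ∀ x ∈ X, {i : ι | x i = 1}.ncard = ρ

/-- `P = conv X` is balanced: for every wall `W` and all distinct star
coordinates `i, j` of `W` one has `|W₀₀|·|W₁₁| ≤ |W₁₀|·|W₀₁|`. -/
def IsBalancedPolytope {ι : Type*} (X : Finset (ι → ℝ)) : Prop :=
  ∀ W : Set (ι → ℝ), IsWall X W → ∀ i j : ι, i ≠ j →
    IsStarCoord W i → IsStarCoord W j →
    {w ∈ W | w i = 0 ∧ w j = 0}.ncard * {w ∈ W | w i = 1 ∧ w j = 1}.ncard ≤
      {w ∈ W | w i = 1 ∧ w j = 0}.ncard * {w ∈ W | w i = 0 ∧ w j = 1}.ncard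

namespace FWM
variable {d : ℕ}

def ones (x : Fin d → ℝ) : Finset (Fin d) := Finset.univ.filter (fun i => x i = 1)

lemma ones_card {X : Finset (Fin d → ℝ)} {ρ : ℕ} (huni : IsUniform X ρ)
    {x : Fin d → ℝ} (hx : x ∈ X) : (ones x).card = ρ := by
  have h := huni x hx
  rwa [show {i : Fin d | x i = 1} = ↑(ones x) by ext i; simp [ones], Set.ncard_coe_finset] at h

lemma exch_adj {X : Finset (Fin d → ℝ)} (hX01 : IsZeroOne X) {ρ : ℕ}
    (huni : IsUniform X ρ) {u v : Fin d → ℝ} {c j : Fin d}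
    (hu : u ∈ X) (hv : v ∈ X) (hjc : j ≠ c) (huc : u c = 0) (hvc : v c = 1)
    (huj : u j = 1) (hvj : v j = 0) (hagr : ∀ i, i ≠ c → i ≠ j → u i = v i) :
    PolytopeAdj X u v := by
  have huv : u ≠ v := fun h => by simp [h, hvc] at huc
  classical
  set T1 : Finset (Fin d) := Finset.univ.filter (fun i => i ≠ c ∧ i ≠ j ∧ u i = 1) with hT1
  set T0 : Finset (Fin d) := Finset.univ.filter (fun i => i ≠ c ∧ i ≠ j ∧ u i = 0) with hT0
  set f : (Fin d → ℝ) →ₗ[ℝ] ℝ :=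
    (∑ i ∈ T1, LinearMap.proj i) - (∑ i ∈ T0, LinearMap.proj i) with hf
  have hfval : ∀ x : Fin d → ℝ, f x = (∑ i ∈ T1, x i) - (∑ i ∈ T0, x i) := by
    intro x; simp [hf, LinearMap.sub_apply, LinearMap.sum_apply]
  set C : ℝ := (T1.card : ℝ) with hC
  -- bound on vertices
  have hub : ∀ x ∈ X, f x ≤ C := by
    intro x hx
    rw [hfval]
    have h1 : ∑ i ∈ T1, x i ≤ C := by
      rw [hC]
      calc ∑ i ∈ T1, x i ≤ ∑ _i ∈ T1, (1:ℝ) := by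
            apply Finset.sum_le_sum
            intro i _
            rcases hX01 x hx i with h | h <;> simp [h]
          _ = T1.card := by simp
    have h0 : (0:ℝ) ≤ ∑ i ∈ T0, x i := by
      apply Finset.sum_nonneg
      intro i _
      rcases hX01 x hx i with h | h <;> simp [h]
    linarith
  -- value at u and v
  have hfu : f u = C := by
    rw [hfval]
    have h1 : ∑ i ∈ T1, u i = C := by
      have he : ∀ i ∈ T1, u i = (1:ℝ) := by
        intro i hi; simp only [hT1, Finset.mem_filter] at hi; exact hi.2.2.2
      rw [Finset.sum_congr rfl he, hC]; simp
    have h0 : ∑ i ∈ T0, u i = 0 := by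
      apply Finset.sum_eq_zero
      intro i hi
      simp only [hT0, Finset.mem_filter] at hi; exact hi.2.2.2
    rw [h1, h0, sub_zero]
  have hfv : f v = C := by
    rw [hfval]
    have h1 : ∑ i ∈ T1, v i = C := by
      have he : ∀ i ∈ T1, v i = (1:ℝ) := by
        intro i hi; simp only [hT1, Finset.mem_filter] at hi
        rw [← hagr i hi.2.1 hi.2.2.1]; exact hi.2.2.2
      rw [Finset.sum_congr rfl he, hC]; simp
    have h0 : ∑ i ∈ T0, v i = 0 := by
      apply Finset.sum_eq_zero
      intro i hi
      simp only [hT0, Finset.mem_filter] at hi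
      rw [← hagr i hi.2.1 hi.2.2.1]; exact hi.2.2.2
    rw [h1, h0, sub_zero]
  -- equality on vertices implies u or v
  have hveq : ∀ x ∈ X, f x = C → x = u ∨ x = v := by
    intro x hx hfx
    rw [hfval] at hfx
    have h1' : ∑ i ∈ T1, x i ≤ C := by
      rw [hC]
      calc ∑ i ∈ T1, x i ≤ ∑ _i ∈ T1, (1:ℝ) := by
            apply Finset.sum_le_sum; intro i _
            rcases hX01 x hx i with h | h <;> simp [h]
          _ = T1.card := by simp
    have h0' : (0:ℝ) ≤ ∑ i ∈ T0, x i := by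
      apply Finset.sum_nonneg; intro i _
      rcases hX01 x hx i with h | h <;> simp [h]
    have h1 : ∑ i ∈ T1, x i = ∑ _i ∈ T1, (1:ℝ) := by
      have : (∑ _i ∈ T1, (1:ℝ)) = C := by simp [hC]
      linarith [this]
    have hones1 : ∀ i ∈ T1, x i = 1 := by
      intro i hi
      have := (Finset.sum_eq_sum_iff_of_le (fun i hi => by
        rcases hX01 x hx i with h | h <;> simp [h])).1 h1
      exact this i hi
    have h0 : ∑ i ∈ T0, x i = 0 := by
      have : (∑ _i ∈ T1, (1:ℝ)) = C := by simp [hC]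
      linarith
    have hzeros : ∀ i ∈ T0, x i = 0 := by
      intro i hi
      have := (Finset.sum_eq_zero_iff_of_nonneg (fun i _ => by
        rcases hX01 x hx i with h | h <;> simp [h])).1 h0
      exact this i hi
    -- x agrees with u off {c, j}
    have hagree : ∀ i, i ≠ c → i ≠ j → x i = u i := by
      intro i hic hij
      rcases hX01 u hu i with h | h
      · exact (hzeros i (by simp [hT0, hic, hij, h])).trans h.symm
      · exact (hones1 i (by simp [hT1, hic, hij, h])).trans h.symm
    -- count ones
    have hcu : (ones u).card = ρ := ones_card huni hu
    have hcx : (ones x).card = ρ := ones_card huni hx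
    have honesu : ones u = insert j T1 := by
      ext i
      simp only [ones, hT1, Finset.mem_filter, Finset.mem_insert, Finset.mem_univ, true_and]
      constructor
      · intro hi
        by_cases hij : i = j
        · left; exact hij
        · right
          refine ⟨fun hic => ?_, hij, hi⟩
          rw [hic] at hi; rw [hi] at huc; norm_num at huc
      · rintro (rfl | ⟨_, _, h⟩)
        · exact huj
        · exact h
    have hjT1 : j ∉ T1 := by simp [hT1]
    have hcardu : T1.card + 1 = ρ := by
      rw [← hcu, honesu, Finset.card_insert_of_notMem hjT1]
    -- ones of x  = T1 ∪ (ones x ∩ {c, j})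
    have honesx : ones x = T1 ∪ (ones x ∩ {c, j}) := by
      ext i
      simp only [ones, hT1, Finset.mem_union, Finset.mem_inter, Finset.mem_filter,
        Finset.mem_univ, true_and, Finset.mem_insert, Finset.mem_singleton]
      constructor
      · intro hi
        by_cases hic : i = c
        · right; exact ⟨hi, Or.inl hic⟩
        · by_cases hij : i = j
          · right; exact ⟨hi, Or.inr hij⟩
          · left
            refine ⟨hic, hij, ?_⟩
            rw [← hagree i hic hij]; exact hi
      · rintro (⟨hic, hij, h⟩ | ⟨hi, _⟩)
        · rw [hagree i hic hij]; exact h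
        · exact hi
    have hdisj : Disjoint T1 (ones x ∩ {c, j}) := by
      rw [Finset.disjoint_left]
      intro i hi hi2
      simp only [hT1, Finset.mem_filter] at hi
      simp only [Finset.mem_inter, Finset.mem_insert, Finset.mem_singleton] at hi2
      rcases hi2.2 with h | h
      · exact hi.2.1 h
      · exact hi.2.2.1 h
    have hcard2 : (ones x ∩ {c, j}).card = 1 := by
      have := hcx
      rw [honesx, Finset.card_union_of_disjoint hdisj] at this
      omega
    -- case on x c
    rcases hX01 x hx c with hxc | hxc
    · -- then x j = 1, x = u
      left
      have hxj : x j = 1 := by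
        by_contra hxj
        have hemp : ones x ∩ {c, j} = ∅ := by
          ext i2
          simp only [Finset.mem_inter, ones, Finset.mem_filter, Finset.mem_univ, true_and,
            Finset.mem_insert, Finset.mem_singleton, Finset.notMem_empty, iff_false]
          rintro ⟨hone2, rfl | rfl⟩
          · rw [hone2] at hxc; norm_num at hxc
          · exact hxj hone2
        rw [hemp] at hcard2; simp at hcard2
      funext i
      by_cases hic : i = c
      · rw [hic, hxc, huc]
      · by_cases hij : i = j
        · rw [hij, hxj, huj]
        · exact hagree i hic hij
    · -- x c = 1; then x j = 0, x = v
      right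
      have hxj : x j = 0 := by
        rcases hX01 x hx j with h | h
        · exact h
        · exfalso
          have : {c, j} ⊆ ones x ∩ {c, j} := by
            intro i hi
            simp only [Finset.mem_insert, Finset.mem_singleton] at hi
            rcases hi with rfl | rfl <;>
              simp [ones, hxc, h, Finset.mem_insert]
          have hle := Finset.card_le_card this
          rw [hcard2, Finset.card_insert_of_notMem (by simp [Ne.symm hjc]), Finset.card_singleton] at hle
          omega
      funext i
      by_cases hic : i = c
      · rw [hic, hxc, hvc]
      · by_cases hij : i = j
        · rw [hij, hxj, hvj]
        · rw [hagree i hic hij]; exact hagr i hic hij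
  -- now the face property
  refine ⟨hu, hv, huv, f, C, ?_, ?_⟩
  · -- upper bound on hull
    intro x hx
    rw [Finset.convexHull_eq] at hx
    obtain ⟨w, hw0, hw1, hwx⟩ := hx
    rw [Finset.centerMass_eq_of_sum_1 _ _ hw1] at hwx
    rw [← hwx]
    rw [map_sum]
    calc ∑ y ∈ X, f (w y • y) = ∑ y ∈ X, w y * f y := by
          apply Finset.sum_congr rfl; intro y _; rw [map_smul]; rfl
      _ ≤ ∑ y ∈ X, w y * C := by
          apply Finset.sum_le_sum; intro y hy
          exact mul_le_mul_of_nonneg_left (hub y hy) (hw0 y hy)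
      _ = C := by rw [← Finset.sum_mul, hw1, one_mul]
  · ext x
    simp only [Set.mem_setOf_eq, Set.mem_sep_iff]
    constructor
    · rintro ⟨hx, hfx⟩
      rw [Finset.convexHull_eq] at hx
      obtain ⟨w, hw0, hw1, hwx⟩ := hx
      rw [Finset.centerMass_eq_of_sum_1 _ _ hw1] at hwx
      have hfsum : ∑ y ∈ X, w y * f y = C := by
        rw [← hfx, ← hwx, map_sum]
        apply Finset.sum_congr rfl; intro y _; rw [map_smul]; rfl
      have hterm : ∀ y ∈ X, w y * (C - f y) = 0 := by
        have hsum0 : ∑ y ∈ X, w y * (C - f y) = 0 := by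
          have : ∑ y ∈ X, w y * (C - f y) = (∑ y ∈ X, w y) * C - ∑ y ∈ X, w y * f y := by
            rw [Finset.sum_mul]
            rw [← Finset.sum_sub_distrib]
            apply Finset.sum_congr rfl; intro y _; ring
          rw [this, hw1, one_mul, hfsum, sub_self]
        intro y hy
        have hnn : ∀ y ∈ X, 0 ≤ w y * (C - f y) := fun y hy =>
          mul_nonneg (hw0 y hy) (by linarith [hub y hy])
        exact (Finset.sum_eq_zero_iff_of_nonneg hnn).1 hsum0 y hy
      -- support in {u, v}
      have hsupp : ∀ y ∈ X, y ≠ u → y ≠ v → w y = 0 := by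
        intro y hy hyu hyv
        rcases mul_eq_zero.1 (hterm y hy) with h | h
        · exact h
        · have : f y = C := by linarith
          rcases hveq y hy this with h' | h'
          · exact absurd h' hyu
          · exact absurd h' hyv
      have huvsub : ({u, v} : Finset (Fin d → ℝ)) ⊆ X := by
        intro y hy
        simp only [Finset.mem_insert, Finset.mem_singleton] at hy
        rcases hy with rfl | rfl
        · exact hu
        · exact hv
      have hw0' : ∀ y ∈ X, y ∉ ({u, v} : Finset (Fin d → ℝ)) → w y = 0 := by
        intro y hy hy2
        simp only [Finset.mem_insert, Finset.mem_singleton, not_or] at hy2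
        exact hsupp y hy hy2.1 hy2.2
      have hxsum : x = w u • u + w v • v := by
        rw [← hwx]
        rw [← Finset.sum_subset huvsub (fun y hy hy2 => by rw [hw0' y hy hy2, zero_smul])]
        rw [Finset.sum_pair huv]; simp only [id]
      have hwsum : w u + w v = 1 := by
        rw [← hw1, ← Finset.sum_subset huvsub (fun y hy hy2 => hw0' y hy hy2)]
        rw [Finset.sum_pair huv]
      exact ⟨w u, w v, hw0 u hu, hw0 v hv, hwsum, hxsum.symm⟩
    · rintro ⟨a, b, ha, hb, hab, rfl⟩
      constructor
      · have hmem : ∀ y ∈ ({u, v} : Set (Fin d → ℝ)), y ∈ convexHull ℝ (X : Set (Fin d → ℝ)) := by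
          rintro y (rfl | rfl) <;> exact subset_convexHull ℝ _ (by simpa)
        exact (convex_convexHull ℝ (X : Set (Fin d → ℝ)))
          (hmem u (Or.inl rfl)) (hmem v (Or.inr rfl)) ha hb hab
      · rw [map_add, map_smul, map_smul, hfu, hfv]
        simp only [smul_eq_mul]
        rw [← add_mul, hab, one_mul]

def Matches (σ : Fin d → Option Bool) (x : Fin d → ℝ) : Prop :=
  ∀ i, ∀ b, σ i = some b → x i = (if b then (1:ℝ) else 0)

variable (X : Finset (Fin d → ℝ))

def WF (σ : Fin d → Option Bool) : Finset (Fin d → ℝ) := X.filter (fun x => Matches σ x)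

def W0 (σ : Fin d → Option Bool) (c : Fin d) : Finset (Fin d → ℝ) :=
  (WF X σ).filter (fun x => x c = 0)
def W1 (σ : Fin d → Option Bool) (c : Fin d) : Finset (Fin d → ℝ) :=
  (WF X σ).filter (fun x => x c = 1)

def Exch (c : Fin d) (u v : Fin d → ℝ) : Prop :=
  ∃ j, j ≠ c ∧ u j = 1 ∧ v j = 0 ∧ ∀ i, i ≠ c → i ≠ j → u i = v i

def Gam (σ : Fin d → Option Bool) (c : Fin d) (A : Finset (Fin d → ℝ)) :
    Finset (Fin d → ℝ) :=
  (W1 X σ c).filter (fun v => ∃ u ∈ A, Exch c u v)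

variable {X}

lemma mem_WF {σ x} : x ∈ WF X σ ↔ x ∈ X ∧ Matches σ x := by simp [WF]

lemma WF_subset {σ} : WF X σ ⊆ X := Finset.filter_subset _ _

lemma Gam_subset_W1 {σ c A} : Gam X σ c A ⊆ W1 X σ c := Finset.filter_subset _ _

lemma Gam_mono {σ c} {A B : Finset (Fin d → ℝ)} (h : A ⊆ B) : Gam X σ c A ⊆ Gam X σ c B := by
  intro v hv
  simp only [Gam, Finset.mem_filter] at hv ⊢
  exact ⟨hv.1, hv.2.imp (fun u hu => ⟨h hu.1, hu.2⟩)⟩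

/-- splitting a subset of a 0/1 family by the value at `f` -/
lemma card_filter_split (hX01 : IsZeroOne X) {S : Finset (Fin d → ℝ)} (hS : S ⊆ X) (f : Fin d) :
    (S.filter (fun x => x f = 0)).card + (S.filter (fun x => x f = 1)).card = S.card := by
  have : S.filter (fun x => x f = 1) = S.filter (fun x => ¬ x f = 0) := by
    apply Finset.filter_congr
    intro x hx
    rcases hX01 x (hS hx) f with h | h <;> simp [h]
  rw [this]
  exact Finset.card_filter_add_card_filter_not _

/-- the set version of a wall finset -/
lemma coe_WF (σ : Fin d → Option Bool) :
    (↑(WF X σ) : Set (Fin d → ℝ)) = {x | x ∈ X ∧ ∀ i, ∀ b, σ i = some b → x i = (if b then (1 : ℝ) else 0)} := by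
  ext x; simp [WF, Matches]

lemma isWall_WF {σ : Fin d → Option Bool} (h : (WF X σ).Nonempty) :
    IsWall X (↑(WF X σ) : Set (Fin d → ℝ)) :=
  ⟨by exact_mod_cast h.to_set, σ, coe_WF σ⟩

lemma sep_coe_ncard {S : Finset (Fin d → ℝ)} {P : (Fin d → ℝ) → Prop} :
    {w ∈ (↑S : Set (Fin d → ℝ)) | P w}.ncard = (S.filter P).card := by
  rw [show {w ∈ (↑S : Set (Fin d → ℝ)) | P w} = ↑(S.filter P) by ext w; simp]
  exact Set.ncard_coe_finset _

/-- instantiation of balancedness to two coordinates on a wall, in finset form: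
`p * s ≤ r * q`. -/
lemma balance_cells (hbal : IsBalancedPolytope X) (σ : Fin d → Option Bool)
    {c f : Fin d} (hcf : c ≠ f)
    {x y z w : Fin d → ℝ} (hx : x ∈ WF X σ) (hy : y ∈ WF X σ) (hxy : x c ≠ y c)
    (hz : z ∈ WF X σ) (hw : w ∈ WF X σ) (hzw : z f ≠ w f) :
    ((W0 X σ c).filter (fun v => v f = 0)).card * ((W1 X σ c).filter (fun v => v f = 1)).card ≤
    ((W1 X σ c).filter (fun v => v f = 0)).card * ((W0 X σ c).filter (fun v => v f = 1)).card := by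
  have hne : (WF X σ).Nonempty := ⟨x, hx⟩
  have h := hbal _ (isWall_WF hne) c f hcf ⟨x, by exact_mod_cast hx, y, by exact_mod_cast hy, hxy⟩
    ⟨z, by exact_mod_cast hz, w, by exact_mod_cast hw, hzw⟩
  have c00 : {w ∈ (↑(WF X σ) : Set (Fin d → ℝ)) | w c = 0 ∧ w f = 0}
      = ↑((W0 X σ c).filter (fun v => v f = 0)) := by
    ext v; simp only [Set.mem_setOf_eq, Set.mem_sep_iff, Finset.coe_filter, Finset.mem_coe,
      Finset.mem_filter, W0]; tauto
  have c11 : {w ∈ (↑(WF X σ) : Set (Fin d → ℝ)) | w c = 1 ∧ w f = 1}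
      = ↑((W1 X σ c).filter (fun v => v f = 1)) := by
    ext v; simp only [Set.mem_setOf_eq, Set.mem_sep_iff, Finset.coe_filter, Finset.mem_coe,
      Finset.mem_filter, W1]; tauto
  have c10 : {w ∈ (↑(WF X σ) : Set (Fin d → ℝ)) | w c = 1 ∧ w f = 0}
      = ↑((W1 X σ c).filter (fun v => v f = 0)) := by
    ext v; simp only [Set.mem_setOf_eq, Set.mem_sep_iff, Finset.coe_filter, Finset.mem_coe,
      Finset.mem_filter, W1]; tauto
  have c01 : {w ∈ (↑(WF X σ) : Set (Fin d → ℝ)) | w c = 0 ∧ w f = 1}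
      = ↑((W0 X σ c).filter (fun v => v f = 1)) := by
    ext v; simp only [Set.mem_setOf_eq, Set.mem_sep_iff, Finset.coe_filter, Finset.mem_coe,
      Finset.mem_filter, W0]; tauto
  rw [c00, c11, c10, c01, Set.ncard_coe_finset, Set.ncard_coe_finset, Set.ncard_coe_finset,
    Set.ncard_coe_finset] at h
  exact h

/-- updating a star coordinate restricts the wall -/
lemma WF_update {σ : Fin d → Option Bool} {f : Fin d} (hf : σ f = none) (b : Bool) :
    WF X (Function.update σ f (some b)) = (WF X σ).filter (fun x => x f = (if b then (1:ℝ) else 0)) := by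
  ext x
  simp only [mem_WF, Finset.mem_filter, Matches]
  constructor
  · rintro ⟨hx, hm⟩
    have hxf : x f = (if b then (1:ℝ) else 0) := hm f b (by simp)
    refine ⟨⟨hx, fun i bb hib => ?_⟩, hxf⟩
    by_cases hif : i = f
    · subst hif; rw [hf] at hib; cases hib
    · exact hm i bb (by rwa [Function.update_of_ne hif])
  · rintro ⟨⟨hx, hm⟩, hxf⟩
    refine ⟨hx, fun i bb hib => ?_⟩
    by_cases hif : i = f
    · subst hif
      rw [Function.update_self] at hib
      obtain rfl : b = bb := Option.some.inj hib
      exact hxf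
    · exact hm i bb (by rwa [Function.update_of_ne hif] at hib)

lemma W0_update {σ : Fin d → Option Bool} {f : Fin d} (hf : σ f = none) (b : Bool) (c : Fin d) :
    W0 X (Function.update σ f (some b)) c = (W0 X σ c).filter (fun x => x f = (if b then (1:ℝ) else 0)) := by
  simp only [W0, WF_update hf, Finset.filter_filter]
  apply Finset.filter_congr
  intro x _
  tauto

lemma W1_update {σ : Fin d → Option Bool} {f : Fin d} (hf : σ f = none) (b : Bool) (c : Fin d) :
    W1 X (Function.update σ f (some b)) c = (W1 X σ c).filter (fun x => x f = (if b then (1:ℝ) else 0)) := by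
  simp only [W1, WF_update hf, Finset.filter_filter]
  apply Finset.filter_congr
  intro x _
  tauto

lemma freecount_update {σ : Fin d → Option Bool} {f : Fin d} (hf : σ f = none) (b : Bool) :
    (Finset.univ.filter (fun i => Function.update σ f (some b) i = none)).card + 1 =
    (Finset.univ.filter (fun i => σ i = none)).card := by
  have he : Finset.univ.filter (fun i => Function.update σ f (some b) i = none) =
      (Finset.univ.filter (fun i => σ i = none)).erase f := by
    ext i
    simp only [Finset.mem_filter, Finset.mem_erase, Finset.mem_univ, true_and]
    rw [Function.update_apply]
    split
    · next h => subst h; simp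
    · next h => simp [h]
  rw [he, Finset.card_erase_of_mem (by simp [hf])]
  have : 0 < (Finset.univ.filter (fun i => σ i = none)).card :=
    Finset.card_pos.2 ⟨f, by simp [hf]⟩
  omega

/-- each member of `X` with `x c = 0` has exactly `ρ` ones, all away from `c` -/
lemma count_ones_erase {X : Finset (Fin d → ℝ)} {ρ : ℕ} (huni : IsUniform X ρ)
    {x : Fin d → ℝ} (hx : x ∈ X) {c : Fin d} (hxc : x c = 0) :
    ((Finset.univ.erase c).filter (fun f => x f = 1)).card = ρ := by
  rw [← ones_card huni hx]
  congr 1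
  ext i
  simp only [Finset.mem_filter, Finset.mem_erase, Finset.mem_univ, true_and, ones, and_true]
  constructor
  · rintro ⟨_, h1⟩; exact h1
  · intro h1
    refine ⟨fun hic => ?_, h1⟩
    rw [hic, hxc] at h1; norm_num at h1

/-- double counting -/
lemma double_count {X : Finset (Fin d → ℝ)} {ρ : ℕ} (huni : IsUniform X ρ)
    {S : Finset (Fin d → ℝ)} (hS : S ⊆ X) {c : Fin d} (hSc : ∀ x ∈ S, x c = 0) :
    ∑ f ∈ Finset.univ.erase c, (S.filter (fun x => x f = 1)).card = ρ * S.card := by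
  have h1 : ∀ f, (S.filter (fun x => x f = 1)).card = ∑ x ∈ S, if x f = 1 then 1 else 0 := by
    intro f; rw [Finset.card_filter]
  calc ∑ f ∈ Finset.univ.erase c, (S.filter (fun x => x f = 1)).card
      = ∑ f ∈ Finset.univ.erase c, ∑ x ∈ S, if x f = 1 then 1 else 0 := by
        apply Finset.sum_congr rfl; intro f _; exact h1 f
    _ = ∑ x ∈ S, ∑ f ∈ Finset.univ.erase c, if x f = 1 then 1 else 0 := Finset.sum_comm
    _ = ∑ x ∈ S, ρ := by
        apply Finset.sum_congr rfl
        intro x hx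
        rw [← Finset.card_filter]
        exact count_ones_erase huni (hS hx) (hSc x hx)
    _ = ρ * S.card := by rw [Finset.sum_const, Finset.card_eq_sum_ones S]; ring


lemma count_ones_erase_one {X : Finset (Fin d → ℝ)} {ρ : ℕ} (huni : IsUniform X ρ)
    {x : Fin d → ℝ} (hx : x ∈ X) {c : Fin d} (hxc : x c = 1) :
    ((Finset.univ.erase c).filter (fun f => x f = 1)).card + 1 = ρ := by
  rw [← ones_card huni hx]
  have he : ones x = insert c ((Finset.univ.erase c).filter (fun f => x f = 1)) := by
    ext i
    simp only [ones, Finset.mem_filter, Finset.mem_insert, Finset.mem_erase, Finset.mem_univ,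
      true_and]
    constructor
    · intro h1
      by_cases hic : i = c
      · exact Or.inl hic
      · exact Or.inr ⟨⟨hic, trivial⟩, h1⟩
    · rintro (rfl | ⟨_, h1⟩)
      · exact hxc
      · exact h1
  rw [he, Finset.card_insert_of_notMem (by simp)]

lemma W0_subset_X {σ : Fin d → Option Bool} {c : Fin d} : W0 X σ c ⊆ X :=
  (Finset.filter_subset _ _).trans (Finset.filter_subset _ _)
lemma W1_subset_X {σ : Fin d → Option Bool} {c : Fin d} : W1 X σ c ⊆ X :=
  (Finset.filter_subset _ _).trans (Finset.filter_subset _ _)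

/-- the degenerate case of the Hall condition: every coordinate other than `c`
is constant on `W0`, so `W0` is a singleton. -/
lemma hall_of_degenerate (hX01 : IsZeroOne X) {ρ : ℕ} (huni : IsUniform X ρ)
    (hbal : IsBalancedPolytope X) (σ : Fin d → Option Bool) (c : Fin d)
    (h0 : (W0 X σ c).Nonempty) (h1 : (W1 X σ c).Nonempty)
    (hB : ∀ f, f ≠ c → ((W0 X σ c).filter (fun x => x f = 0)).card = 0 ∨
                      ((W0 X σ c).filter (fun x => x f = 1)).card = 0)
    {A : Finset (Fin d → ℝ)} (hA : A ⊆ W0 X σ c) :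
    (W1 X σ c).card * A.card ≤ (W0 X σ c).card * (Gam X σ c A).card := by
  obtain ⟨u, hu⟩ := h0
  have huX : u ∈ X := W0_subset_X hu
  have huc : u c = 0 := (Finset.mem_filter.1 hu).2
  -- W0 is a singleton
  have hsing : W0 X σ c = {u} := by
    apply Finset.eq_singleton_iff_unique_mem.2
    refine ⟨hu, fun u' hu' => ?_⟩
    have hu'X : u' ∈ X := W0_subset_X hu'
    funext i
    by_cases hic : i = c
    · rw [hic, (Finset.mem_filter.1 hu').2, huc]
    · rcases hB i hic with h | h
      · -- no element has i-value 0, so both are 1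
        have hne : ∀ z ∈ W0 X σ c, z i = 1 := by
          intro z hz
          rcases hX01 z (W0_subset_X hz) i with h' | h'
          · exfalso
            have : z ∈ (W0 X σ c).filter (fun x => x i = 0) := Finset.mem_filter.2 ⟨hz, h'⟩
            rw [Finset.card_eq_zero.1 h] at this
            simp at this
          · exact h'
        rw [hne u' hu', hne u hu]
      · have hne : ∀ z ∈ W0 X σ c, z i = 0 := by
          intro z hz
          rcases hX01 z (W0_subset_X hz) i with h' | h'
          · exact h'
          · exfalso
            have : z ∈ (W0 X σ c).filter (fun x => x i = 1) := Finset.mem_filter.2 ⟨hz, h'⟩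
            rw [Finset.card_eq_zero.1 h] at this
            simp at this
        rw [hne u' hu', hne u hu]
  rcases Finset.subset_singleton_iff.1 (hsing ▸ hA) with rfl | rfl
  · simp
  · -- A = {u}; show W1 ⊆ Gam
    have hGam : W1 X σ c ⊆ Gam X σ c {u} := by
      intro v hv
      have hvX : v ∈ X := W1_subset_X hv
      have hvc : v c = 1 := (Finset.mem_filter.1 hv).2
      -- Dv is empty
      set Dv : Finset (Fin d) :=
        (Finset.univ.erase c).filter (fun i => u i = 0 ∧ v i = 1) with hDvdef
      have hDv : Dv = ∅ := by
        by_contra hne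
        obtain ⟨i', hi'⟩ := Finset.nonempty_of_ne_empty hne
        simp only [hDvdef, Finset.mem_filter, Finset.mem_erase, Finset.mem_univ, true_and, and_true] at hi'
        obtain ⟨hi'c, hui', hvi'⟩ := hi'
        have hbal' := balance_cells hbal σ (Ne.symm hi'c)
          ((Finset.mem_filter.1 hu).1) ((Finset.mem_filter.1 hv).1)
          (by rw [huc, hvc]; norm_num)
          ((Finset.mem_filter.1 hu).1) ((Finset.mem_filter.1 hv).1)
          (by rw [hui', hvi']; norm_num)
        have hq0 : ((W0 X σ c).filter (fun x => x i' = 1)).card = 0 := by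
          rw [hsing]
          rw [Finset.card_eq_zero, Finset.filter_eq_empty_iff]
          intro z hz
          rw [Finset.mem_singleton.1 hz, hui']
          norm_num
        have hp0 : 0 < ((W0 X σ c).filter (fun x => x i' = 0)).card := by
          apply Finset.card_pos.2
          exact ⟨u, Finset.mem_filter.2 ⟨hu, hui'⟩⟩
        have hs0 : 0 < ((W1 X σ c).filter (fun x => x i' = 1)).card := by
          apply Finset.card_pos.2
          exact ⟨v, Finset.mem_filter.2 ⟨hv, hvi'⟩⟩
        rw [hq0, Nat.mul_zero] at hbal'
        exact absurd hbal' (Nat.mul_pos hp0 hs0).not_ge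
      -- counting: Du has exactly one element
      set F11 : Finset (Fin d) :=
        (Finset.univ.erase c).filter (fun i => u i = 1 ∧ v i = 1) with hF11def
      set Du : Finset (Fin d) :=
        (Finset.univ.erase c).filter (fun i => u i = 1 ∧ v i = 0) with hDudef
      have heu : (Finset.univ.erase c).filter (fun i => u i = 1) = F11 ∪ Du := by
        ext i
        simp only [hF11def, hDudef, Finset.mem_union, Finset.mem_filter, Finset.mem_erase,
          Finset.mem_univ, true_and]
        constructor
        · rintro ⟨hic, h1⟩
          rcases hX01 v hvX i with h' | h'
          · exact Or.inr ⟨hic, h1, h'⟩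
          · exact Or.inl ⟨hic, h1, h'⟩
        · rintro (⟨hic, h1, _⟩ | ⟨hic, h1, _⟩) <;> exact ⟨hic, h1⟩
      have hdisj : Disjoint F11 Du := by
        rw [Finset.disjoint_left]
        intro i hi hi2
        simp only [hF11def, Finset.mem_filter] at hi
        simp only [hDudef, Finset.mem_filter] at hi2
        rw [hi.2.2] at hi2
        norm_num at hi2
      have hev : (Finset.univ.erase c).filter (fun i => v i = 1) = F11 := by
        ext i
        simp only [hF11def, Finset.mem_filter, Finset.mem_erase, Finset.mem_univ, true_and,
          and_true]
        constructor
        · rintro ⟨hic, h1⟩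
          refine ⟨hic, ?_, h1⟩
          rcases hX01 u huX i with h' | h'
          · exfalso
            have : i ∈ Dv := by
              simp only [hDvdef, Finset.mem_filter, Finset.mem_erase, Finset.mem_univ, true_and,
              and_true]
              exact ⟨hic, h', h1⟩
            rw [hDv] at this; simp at this
          · exact h'
        · rintro ⟨hic, _, h1⟩; exact ⟨hic, h1⟩
      have hcu : (F11 ∪ Du).card = ρ := by rw [← heu]; exact count_ones_erase huni huX huc
      have hcv : F11.card + 1 = ρ := by rw [← hev]; exact count_ones_erase_one huni hvX hvc
      have hDu1 : Du.card = 1 := by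
        rw [Finset.card_union_of_disjoint hdisj] at hcu
        omega
      obtain ⟨j, hj⟩ := Finset.card_eq_one.1 hDu1
      have hjmem : j ∈ Du := by rw [hj]; exact Finset.mem_singleton_self j
      simp only [hDudef, Finset.mem_filter, Finset.mem_erase, Finset.mem_univ, true_and, and_true] at hjmem
      obtain ⟨hjc, huj, hvj⟩ := hjmem
      -- exchange
      have hexch : Exch c u v := by
        refine ⟨j, hjc, huj, hvj, fun i hic hij => ?_⟩
        rcases hX01 u huX i with h' | h' <;> rcases hX01 v hvX i with h'' | h''
        · rw [h', h'']
        · exfalso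
          have : i ∈ Dv := by
            simp only [hDvdef, Finset.mem_filter, Finset.mem_erase, Finset.mem_univ, true_and,
              and_true]
            exact ⟨hic, h', h''⟩
          rw [hDv] at this; simp at this
        · exfalso
          have : i ∈ Du := by
            simp only [hDudef, Finset.mem_filter, Finset.mem_erase, Finset.mem_univ, true_and,
              and_true]
            exact ⟨hic, h', h''⟩
          rw [hj] at this
          exact hij (Finset.mem_singleton.1 this)
        · rw [h', h'']
      exact Finset.mem_filter.2 ⟨hv, u, Finset.mem_singleton_self u, hexch⟩
    have hGamcard : (Gam X σ c {u}).card = (W1 X σ c).card :=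
      le_antisymm (Finset.card_le_card Gam_subset_W1) (Finset.card_le_card hGam)
    rw [hsing, hGamcard, Finset.card_singleton]
    ring_nf
    exact le_refl _


lemma arith_s0 {p q a0 a1 : ℕ} (h3 : (p + q) * a0 < p * (a0 + a1)) :
    (a0 + a1) * q < (p + q) * a1 := by
  zify at h3 ⊢
  nlinarith [h3]

lemma arith_contra {p q r s a0 a1 g0 g1 : ℕ} (hp : 0 < p) (hq : 0 < q)
    (hcon : (p + q) * (g0 + g1) < (r + s) * (a0 + a1))
    (ih0 : r * a0 ≤ p * g0) (ih1 : s * a1 ≤ q * g1)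
    (hbal : p * s ≤ r * q) (hswap : p * a1 ≤ q * a0) : False := by
  zify at hcon ih0 ih1 hbal hswap
  nlinarith [mul_le_mul_of_nonneg_left ih0 (show (0:ℤ) ≤ (q:ℤ)*((p:ℤ)+(q:ℤ)) by positivity),
             mul_le_mul_of_nonneg_left ih1 (show (0:ℤ) ≤ (p:ℤ)*((p:ℤ)+(q:ℤ)) by positivity),
             mul_lt_mul_of_pos_left hcon (show (0:ℤ) < (p:ℤ)*(q:ℤ) by positivity),
             mul_nonneg (sub_nonneg.2 hbal) (sub_nonneg.2 hswap)]

/-- **Core Hall condition** for the exchange graph across a star coordinate of a wall. -/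
lemma hall_main (hX01 : IsZeroOne X) {ρ : ℕ} (huni : IsUniform X ρ)
    (hbal : IsBalancedPolytope X) :
    ∀ n : ℕ, ∀ σ : Fin d → Option Bool,
      (Finset.univ.filter (fun i => σ i = none)).card ≤ n →
      ∀ c : Fin d, (W0 X σ c).Nonempty → (W1 X σ c).Nonempty →
      ∀ A : Finset (Fin d → ℝ), A ⊆ W0 X σ c →
      (W1 X σ c).card * A.card ≤ (W0 X σ c).card * (Gam X σ c A).card := by
  intro n
  induction n with
  | zero =>
    intro σ hσ c h0 h1 A hA
    apply hall_of_degenerate hX01 huni hbal σ c h0 h1 (fun f hfc => ?_) hA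
    have hf : σ f ≠ none := by
      intro hf
      have hmem : f ∈ Finset.univ.filter (fun i => σ i = none) := by simp [hf]
      rw [Finset.card_eq_zero.1 (Nat.le_zero.1 hσ)] at hmem
      simp at hmem
    obtain ⟨b, hb⟩ := Option.ne_none_iff_exists'.1 hf
    cases b
    · right
      rw [Finset.card_eq_zero, Finset.filter_eq_empty_iff]
      intro x hx
      have := (Finset.mem_filter.1 ((Finset.filter_subset _ _) hx)).2 f false hb
      simp at this
      rw [this]
      norm_num
    · left
      rw [Finset.card_eq_zero, Finset.filter_eq_empty_iff]
      intro x hx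
      have := (Finset.mem_filter.1 ((Finset.filter_subset _ _) hx)).2 f true hb
      simp at this
      rw [this]
      norm_num
  | succ n ih =>
    intro σ hσ c h0 h1 A hA
    -- cell cardinalities
    set a := (W0 X σ c).card with hadef
    set b := (W1 X σ c).card with hbdef
    by_cases hB : ∀ f, f ≠ c → ((W0 X σ c).filter (fun x => x f = 0)).card = 0 ∨
        ((W0 X σ c).filter (fun x => x f = 1)).card = 0
    · exact hall_of_degenerate hX01 huni hbal σ c h0 h1 hB hA
    by_contra hcon
    push_neg at hcon
    push_neg at hB
    obtain ⟨f₀, hf₀c, hp₀, hq₀⟩ := hB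
    have hp₀' : 0 < ((W0 X σ c).filter (fun x => x f₀ = 0)).card := Nat.pos_of_ne_zero hp₀
    have hq₀' : 0 < ((W0 X σ c).filter (fun x => x f₀ = 1)).card := Nat.pos_of_ne_zero hq₀
    -- the strict skew inequality at any coordinate with both cells nonempty
    have strict : ∀ f, f ≠ c → 0 < ((W0 X σ c).filter (fun x => x f = 0)).card →
        0 < ((W0 X σ c).filter (fun x => x f = 1)).card →
        A.card * ((W0 X σ c).filter (fun x => x f = 1)).card <
          a * (A.filter (fun x => x f = 1)).card := by
      intro f hfc hp hq
      set p := ((W0 X σ c).filter (fun x => x f = 0)).card with hpdef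
      set q := ((W0 X σ c).filter (fun x => x f = 1)).card with hqdef
      set r := ((W1 X σ c).filter (fun x => x f = 0)).card with hrdef
      set s := ((W1 X σ c).filter (fun x => x f = 1)).card with hsdef
      have hsplitW0 : p + q = a := card_filter_split hX01 W0_subset_X f
      have hsplitW1 : r + s = b := card_filter_split hX01 W1_subset_X f
      have hAX : A ⊆ X := hA.trans W0_subset_X
      have hsplitA : (A.filter (fun x => x f = 0)).card + (A.filter (fun x => x f = 1)).card
          = A.card := card_filter_split hX01 hAX f
      set A0 := A.filter (fun x => x f = 0) with hA0def
      set A1 := A.filter (fun x => x f = 1) with hA1def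
      -- σ f = none
      have hσf : σ f = none := by
        by_contra hf
        obtain ⟨bb, hb⟩ := Option.ne_none_iff_exists'.1 hf
        cases bb
        · have : q = 0 := by
            rw [hqdef, Finset.card_eq_zero, Finset.filter_eq_empty_iff]
            intro x hx
            have := (Finset.mem_filter.1 ((Finset.filter_subset _ _) hx)).2 f false hb
            simp at this
            rw [this]; norm_num
          exact absurd this (Nat.pos_iff_ne_zero.1 hq)
        · have : p = 0 := by
            rw [hpdef, Finset.card_eq_zero, Finset.filter_eq_empty_iff]
            intro x hx
            have := (Finset.mem_filter.1 ((Finset.filter_subset _ _) hx)).2 f true hb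
            simp at this
            rw [this]; norm_num
          exact absurd this (Nat.pos_iff_ne_zero.1 hp)
      -- witnesses
      obtain ⟨zp, hzp⟩ := Finset.card_pos.1 hp
      obtain ⟨zq, hzq⟩ := Finset.card_pos.1 hq
      have h0' := h0
      have h1' := h1
      obtain ⟨u₀, hu₀⟩ := h0'
      obtain ⟨v₀, hv₀⟩ := h1'
      -- r > 0
      have hr : 0 < r := by
        by_contra hr0
        have hr0' : r = 0 := Nat.eq_zero_of_not_pos hr0
        have hs' : 0 < s := by
          have hbpos : 0 < b := Finset.card_pos.2 h1
          rw [← hsplitW1, hr0', Nat.zero_add] at hbpos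
          exact hbpos
        obtain ⟨zs, hzs⟩ := Finset.card_pos.1 hs'
        have hbal' := balance_cells hbal σ (Ne.symm hfc)
          ((Finset.mem_filter.1 hu₀).1) ((Finset.mem_filter.1 hv₀).1)
          (by rw [(Finset.mem_filter.1 hu₀).2, (Finset.mem_filter.1 hv₀).2]; norm_num)
          ((Finset.mem_filter.1 (Finset.filter_subset _ _ hzp)).1)
          ((Finset.mem_filter.1 (Finset.filter_subset _ _ hzs)).1)
          (by rw [(Finset.mem_filter.1 hzp).2, (Finset.mem_filter.1 hzs).2]; norm_num)
        rw [← hpdef, ← hqdef, ← hrdef, ← hsdef, hr0', Nat.zero_mul] at hbal'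
        exact absurd hbal' (Nat.mul_pos hp hs').not_ge
      -- the f = 0 subwall
      set σ0 := Function.update σ f (some false) with hσ0def
      have hW00 : W0 X σ0 c = (W0 X σ c).filter (fun x => x f = 0) := by
        rw [hσ0def, W0_update hσf false c]
        simp
      have hW10 : W1 X σ0 c = (W1 X σ c).filter (fun x => x f = 0) := by
        rw [hσ0def, W1_update hσf false c]
        simp
      have hfree0 : (Finset.univ.filter (fun i => σ0 i = none)).card ≤ n := by
        have hfc2 := freecount_update hσf false
        rw [← hσ0def] at hfc2
        have h2 : (Finset.univ.filter (fun i => σ0 i = none)).card + 1 ≤ n + 1 := by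
          rw [hfc2]; exact hσ
        exact Nat.succ_le_succ_iff.1 h2
      have hA0sub : A0 ⊆ W0 X σ0 c := by
        rw [hW00, hA0def]
        exact Finset.filter_subset_filter _ hA
      have IH0 := ih σ0 hfree0 c
        (by rw [hW00]; exact Finset.card_pos.1 hp)
        (by rw [hW10]; exact Finset.card_pos.1 hr)
        A0 hA0sub
      rw [hW00, hW10, ← hpdef, ← hrdef] at IH0
      -- Gam of the subwall is inside Gam, with f-value 0
      have hGam0sub : Gam X σ0 c A0 ⊆ (Gam X σ c A).filter (fun v => v f = 0) := by
        intro v hv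
        simp only [Gam, Finset.mem_filter] at hv ⊢
        rw [hW10] at hv
        obtain ⟨hvm, w, hw, hexch⟩ := hv
        rw [Finset.mem_filter] at hvm
        exact ⟨⟨hvm.1, w, (Finset.filter_subset _ _) hw, hexch⟩, hvm.2⟩
      have hG0le : (Gam X σ0 c A0).card ≤ (Gam X σ c A).card :=
        Finset.card_le_card (hGam0sub.trans (Finset.filter_subset _ _))
      rcases Nat.eq_zero_or_pos s with hs0 | hs
      · -- s = 0, so b = r
        have hbr : b = r := by rw [hs0, Nat.add_zero] at hsplitW1; exact hsplitW1.symm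
        have h1c : a * (Gam X σ0 c A0).card < r * A.card := by
          calc a * (Gam X σ0 c A0).card ≤ a * (Gam X σ c A).card := Nat.mul_le_mul_left a hG0le
            _ < b * A.card := hcon
            _ = r * A.card := by rw [hbr]
        have h2 : r * (a * A0.card) < r * (p * A.card) := by
          calc r * (a * A0.card) = a * (r * A0.card) := by ring
            _ ≤ a * (p * (Gam X σ0 c A0).card) := Nat.mul_le_mul_left a IH0
            _ = p * (a * (Gam X σ0 c A0).card) := by ring
            _ < p * (r * A.card) := mul_lt_mul_of_pos_left h1c hp
            _ = r * (p * A.card) := by ring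
        have h3 : a * A0.card < p * A.card := Nat.lt_of_mul_lt_mul_left h2
        rw [← hsplitW0, ← hsplitA] at h3 ⊢
        exact arith_s0 h3
      · -- s > 0
        set σ1 := Function.update σ f (some true) with hσ1def
        have hW01 : W0 X σ1 c = (W0 X σ c).filter (fun x => x f = 1) := by
          rw [hσ1def, W0_update hσf true c]
          simp
        have hW11 : W1 X σ1 c = (W1 X σ c).filter (fun x => x f = 1) := by
          rw [hσ1def, W1_update hσf true c]
          simp
        have hfree1 : (Finset.univ.filter (fun i => σ1 i = none)).card ≤ n := by
          have hfc2 := freecount_update hσf true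
          rw [← hσ1def] at hfc2
          have h2 : (Finset.univ.filter (fun i => σ1 i = none)).card + 1 ≤ n + 1 := by
            rw [hfc2]; exact hσ
          exact Nat.succ_le_succ_iff.1 h2
        have hA1sub : A1 ⊆ W0 X σ1 c := by
          rw [hW01, hA1def]
          exact Finset.filter_subset_filter _ hA
        have IH1 := ih σ1 hfree1 c
          (by rw [hW01]; exact Finset.card_pos.1 hq)
          (by rw [hW11]; exact Finset.card_pos.1 hs)
          A1 hA1sub
        rw [hW01, hW11, ← hqdef, ← hsdef] at IH1
        have hGam1sub : Gam X σ1 c A1 ⊆ (Gam X σ c A).filter (fun v => v f = 1) := by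
          intro v hv
          simp only [Gam, Finset.mem_filter] at hv ⊢
          rw [hW11] at hv
          obtain ⟨hvm, w, hw, hexch⟩ := hv
          rw [Finset.mem_filter] at hvm
          exact ⟨⟨hvm.1, w, (Finset.filter_subset _ _) hw, hexch⟩, hvm.2⟩
        have hGsum : (Gam X σ0 c A0).card + (Gam X σ1 c A1).card ≤ (Gam X σ c A).card := by
          have hsplitG := card_filter_split hX01
            ((Gam_subset_W1 (σ := σ) (c := c) (A := A)).trans W1_subset_X) f
          calc (Gam X σ0 c A0).card + (Gam X σ1 c A1).card
              ≤ ((Gam X σ c A).filter (fun v => v f = 0)).card +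
                ((Gam X σ c A).filter (fun v => v f = 1)).card :=
                Nat.add_le_add (Finset.card_le_card hGam0sub) (Finset.card_le_card hGam1sub)
            _ = (Gam X σ c A).card := hsplitG
        obtain ⟨zs, hzs⟩ := Finset.card_pos.1 hs
        have hbal' := balance_cells hbal σ (Ne.symm hfc)
          ((Finset.mem_filter.1 hu₀).1) ((Finset.mem_filter.1 hv₀).1)
          (by rw [(Finset.mem_filter.1 hu₀).2, (Finset.mem_filter.1 hv₀).2]; norm_num)
          ((Finset.mem_filter.1 (Finset.filter_subset _ _ hzp)).1)
          ((Finset.mem_filter.1 (Finset.filter_subset _ _ hzs)).1)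
          (by rw [(Finset.mem_filter.1 hzp).2, (Finset.mem_filter.1 hzs).2]; norm_num)
        rw [← hpdef, ← hqdef, ← hrdef, ← hsdef] at hbal'
        by_contra hgoal
        push_neg at hgoal
        rw [← hsplitW0, ← hsplitA] at hgoal
        have hswap' : p * A1.card ≤ q * A0.card := by
          rw [add_mul, add_mul, mul_comm A0.card q, mul_comm A1.card q] at hgoal
          exact Nat.add_le_add_iff_right.1 hgoal
        have hcon' : a * ((Gam X σ0 c A0).card + (Gam X σ1 c A1).card) < b * A.card :=
          lt_of_le_of_lt (Nat.mul_le_mul_left a hGsum) hcon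
        rw [← hsplitW0, ← hsplitW1, ← hsplitA] at hcon'
        exact arith_contra hp hq hcon' IH0 IH1 hbal' hswap' 
    -- summation over all coordinates
    have hAX : A ⊆ X := hA.trans W0_subset_X
    have claim1 : ∀ f ∈ Finset.univ.erase c,
        A.card * ((W0 X σ c).filter (fun x => x f = 1)).card ≤
          a * (A.filter (fun x => x f = 1)).card := by
      intro f hf
      have hfc : f ≠ c := (Finset.mem_erase.1 hf).1
      rcases Nat.eq_zero_or_pos ((W0 X σ c).filter (fun x => x f = 0)).card with hpz | hpp
      · -- p = 0 : A1 = A and q = a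
        have hsplitW0 := card_filter_split hX01 (W0_subset_X (σ := σ) (c := c)) f
        rw [hpz, Nat.zero_add] at hsplitW0
        have hA0z : (A.filter (fun x => x f = 0)).card = 0 := by
          rw [Finset.card_eq_zero] at hpz ⊢
          have hsub := Finset.filter_subset_filter (fun x => x f = 0) hA
          rw [hpz] at hsub
          exact Finset.subset_empty.1 hsub
        have hsplitA := card_filter_split hX01 hAX f
        rw [hA0z, Nat.zero_add] at hsplitA
        rw [hsplitW0, hsplitA]
        exact le_of_eq (mul_comm _ _)
      rcases Nat.eq_zero_or_pos ((W0 X σ c).filter (fun x => x f = 1)).card with hqz | hqp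
      · have hA1z : (A.filter (fun x => x f = 1)).card = 0 := by
          rw [Finset.card_eq_zero] at hqz ⊢
          have hsub := Finset.filter_subset_filter (fun x => x f = 1) hA
          rw [hqz] at hsub
          exact Finset.subset_empty.1 hsub
        rw [hqz, hA1z]
        simp
      · exact le_of_lt (strict f hfc hpp hqp)
    have claim2 := strict f₀ hf₀c hp₀' hq₀'
    have hsum1 : ∑ f ∈ Finset.univ.erase c,
        A.card * ((W0 X σ c).filter (fun x => x f = 1)).card = A.card * (ρ * a) := by
      rw [← Finset.mul_sum]
      congr 1
      rw [hadef]
      exact double_count huni W0_subset_X (fun x hx => (Finset.mem_filter.1 hx).2)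
    have hsum2 : ∑ f ∈ Finset.univ.erase c,
        a * (A.filter (fun x => x f = 1)).card = a * (ρ * A.card) := by
      rw [← Finset.mul_sum]
      congr 1
      exact double_count huni hAX (fun x hx => (Finset.mem_filter.1 (hA hx)).2)
    have hlt := Finset.sum_lt_sum claim1
      ⟨f₀, Finset.mem_erase.2 ⟨hf₀c, Finset.mem_univ f₀⟩, claim2⟩
    rw [hsum1, hsum2] at hlt
    have heq : A.card * (ρ * a) = a * (ρ * A.card) := by ring
    rw [heq] at hlt
    exact lt_irrefl _ hlt


set_option maxHeartbeats 1000000 in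
/-- From the Hall condition, construct the fractional matching. -/
lemma exists_matching (hX01 : IsZeroOne X) {ρ : ℕ} (huni : IsUniform X ρ)
    (hbal : IsBalancedPolytope X) (σ : Fin d → Option Bool) (c : Fin d)
    (h0 : (W0 X σ c).Nonempty) (h1 : (W1 X σ c).Nonempty) :
    ∃ w : (Fin d → ℝ) → (Fin d → ℝ) → ℚ,
      (∀ u v, 0 ≤ w u v) ∧
      (∀ u v, w u v ≠ 0 → u ∈ W0 X σ c ∧ v ∈ W1 X σ c ∧ Exch c u v) ∧
      (∀ u ∈ W0 X σ c, ∑ v ∈ X, w u v = 1 / ((W0 X σ c).card : ℚ)) ∧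
      (∀ v ∈ W1 X σ c, ∑ u ∈ X, w u v = 1 / ((W1 X σ c).card : ℚ)) := by
  classical
  set a := (W0 X σ c).card with hadef
  set b := (W1 X σ c).card with hbdef
  have ha : 0 < a := Finset.card_pos.2 h0
  have hb : 0 < b := Finset.card_pos.2 h1
  set Nbr : (Fin d → ℝ) → Finset (Fin d → ℝ) := fun u => Gam X σ c {u} with hNbrdef
  -- the blow-up bipartite graph
  set t : ({x // x ∈ W0 X σ c} × Fin b) → Finset ((Fin d → ℝ) × Fin a) :=
    fun ui => (Nbr ui.1.1) ×ˢ Finset.univ with htdef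
  have hHall : ∀ s : Finset ({x // x ∈ W0 X σ c} × Fin b), s.card ≤ (s.biUnion t).card := by
    intro s
    set A := s.image (fun x => (x.1.1 : Fin d → ℝ)) with hAdef
    have hAsub : A ⊆ W0 X σ c := by
      intro u hu
      rw [hAdef] at hu
      obtain ⟨x, _, rfl⟩ := Finset.mem_image.1 hu
      exact x.1.2
    have hcard1 : s.card ≤ A.card * b := by
      have hinj : Function.Injective
          (fun x : {x // x ∈ W0 X σ c} × Fin b => ((x.1.1 : Fin d → ℝ), x.2)) := by
        intro x y hxy
        obtain ⟨h1', h2'⟩ := Prod.mk.injEq .. ▸ hxy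
        exact Prod.ext (Subtype.ext h1') h2'
      calc s.card = (s.image (fun x => ((x.1.1 : Fin d → ℝ), x.2))).card :=
            (Finset.card_image_of_injective s hinj).symm
        _ ≤ (A ×ˢ (Finset.univ : Finset (Fin b))).card := by
            apply Finset.card_le_card
            intro y hy
            obtain ⟨x, hx, rfl⟩ := Finset.mem_image.1 hy
            rw [Finset.mem_product]
            exact ⟨Finset.mem_image_of_mem _ hx, Finset.mem_univ _⟩
        _ = A.card * b := by rw [Finset.card_product, Finset.card_univ, Fintype.card_fin]
    have hbiun : s.biUnion t = (Gam X σ c A) ×ˢ (Finset.univ : Finset (Fin a)) := by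
      ext ⟨v, j⟩
      rw [Finset.mem_biUnion, Finset.mem_product]
      constructor
      · rintro ⟨x, hx, hvj⟩
        rw [htdef] at hvj
        rw [Finset.mem_product] at hvj
        refine ⟨?_, Finset.mem_univ _⟩
        have := hvj.1
        rw [hNbrdef] at this
        simp only [Gam, Finset.mem_filter] at this ⊢
        obtain ⟨hv1, u', hu', hex⟩ := this
        refine ⟨hv1, x.1.1, ?_, ?_⟩
        · rw [hAdef]; exact Finset.mem_image_of_mem _ hx
        · rwa [Finset.mem_singleton.1 hu'] at hex
      · rintro ⟨hv, _⟩
        simp only [Gam, Finset.mem_filter] at hv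
        obtain ⟨hv1, u, hu, hex⟩ := hv
        rw [hAdef] at hu
        obtain ⟨x, hx, rfl⟩ := Finset.mem_image.1 hu
        refine ⟨x, hx, ?_⟩
        rw [htdef, Finset.mem_product]
        constructor
        · rw [hNbrdef]
          simp only [Gam, Finset.mem_filter]
          exact ⟨hv1, _, Finset.mem_singleton_self _, hex⟩
        · exact Finset.mem_univ _
    rw [hbiun, Finset.card_product, Finset.card_univ, Fintype.card_fin]
    calc s.card ≤ A.card * b := hcard1
      _ ≤ (Gam X σ c A).card * a := by
          have := hall_main hX01 huni hbal
            (Finset.univ.filter (fun i => σ i = none)).card σ le_rfl c h0 h1 A hAsub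
          calc A.card * b = b * A.card := mul_comm _ _
            _ ≤ a * (Gam X σ c A).card := this
            _ = (Gam X σ c A).card * a := mul_comm _ _
  obtain ⟨F, hFinj, hFmem⟩ := (Finset.all_card_le_biUnion_card_iff_existsInjective' t).1 hHall
  -- repackage into the subtype
  have hFW1 : ∀ x, (F x).1 ∈ W1 X σ c := by
    intro x
    have := hFmem x
    rw [htdef, Finset.mem_product] at this
    exact Gam_subset_W1 this.1
  have hFexch : ∀ x, (F x).1 ∈ W1 X σ c ∧ Exch c x.1.1 (F x).1 := by
    intro x
    have := hFmem x
    rw [htdef, Finset.mem_product] at this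
    have h2 := this.1
    rw [hNbrdef] at h2
    simp only [Gam, Finset.mem_filter] at h2
    obtain ⟨hv1, u', hu', hex⟩ := h2
    exact ⟨hv1, by rwa [Finset.mem_singleton.1 hu'] at hex⟩
  set G : ({x // x ∈ W0 X σ c} × Fin b) → ({x // x ∈ W1 X σ c} × Fin a) :=
    fun x => (⟨(F x).1, hFW1 x⟩, (F x).2) with hGdef
  have hGinj : Function.Injective G := by
    intro x y hxy
    apply hFinj
    rw [hGdef] at hxy
    obtain ⟨h1', h2'⟩ := Prod.mk.injEq .. ▸ hxy
    exact Prod.ext (congrArg Subtype.val h1') h2'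
  have hGbij : Function.Bijective G := by
    rw [Fintype.bijective_iff_injective_and_card]
    refine ⟨hGinj, ?_⟩
    simp only [Fintype.card_prod, Fintype.card_coe, Fintype.card_fin]
    rw [← hadef, ← hbdef, mul_comm]
  -- counts
  set cnt : (Fin d → ℝ) → (Fin d → ℝ) → ℕ := fun u v =>
    (Finset.univ.filter (fun x : {x // x ∈ W0 X σ c} × Fin b =>
      (x.1.1 : Fin d → ℝ) = u ∧ ((G x).1.1 : Fin d → ℝ) = v)).card with hcntdef
  refine ⟨fun u v => (cnt u v : ℚ) / (a * b), ?_, ?_, ?_, ?_⟩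
  · intro u v; positivity
  · intro u v hw
    have hcnt : cnt u v ≠ 0 := by
      intro h
      apply hw
      show (cnt u v : ℚ) / (a * b) = 0
      rw [h]
      simp
    have hpos : 0 < (Finset.univ.filter (fun x : {x // x ∈ W0 X σ c} × Fin b =>
        (x.1.1 : Fin d → ℝ) = u ∧ ((G x).1.1 : Fin d → ℝ) = v)).card :=
      Nat.pos_of_ne_zero hcnt
    obtain ⟨x, hx⟩ := Finset.card_pos.1 hpos
    rw [Finset.mem_filter] at hx
    obtain ⟨-, h1', h2'⟩ := hx
    subst h1'
    subst h2'
    exact ⟨x.1.2, (hFexch x).1, (hFexch x).2⟩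
  · -- row sums
    intro u hu
    set T := Finset.univ.filter
      (fun x : {x // x ∈ W0 X σ c} × Fin b => (x.1.1 : Fin d → ℝ) = u) with hTdef
    have hTcard : T.card = b := by
      have : T = {(⟨u, hu⟩ : {x // x ∈ W0 X σ c})} ×ˢ (Finset.univ : Finset (Fin b)) := by
        ext ⟨x, i⟩
        rw [hTdef]
        simp only [Finset.mem_filter, Finset.mem_univ, true_and, Finset.mem_product,
          Finset.mem_singleton]
        constructor
        · intro h; exact ⟨Subtype.ext h, trivial⟩
        · rintro ⟨rfl, -⟩; rfl
      rw [this, Finset.card_product, Finset.card_singleton, Finset.card_univ,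
        Fintype.card_fin, one_mul]
    have hfib : T.card = ∑ v ∈ X, cnt u v := by
      rw [hcntdef]
      rw [Finset.card_eq_sum_card_fiberwise
        (f := fun x : {x // x ∈ W0 X σ c} × Fin b => ((G x).1.1 : Fin d → ℝ)) (t := X)
        (fun x hx => W1_subset_X (G x).1.2)]
      apply Finset.sum_congr rfl
      intro v _
      congr 1
      rw [hTdef, Finset.filter_filter]
    rw [← Finset.sum_div,
      show (∑ v ∈ X, (cnt u v : ℚ)) = ((∑ v ∈ X, cnt u v : ℕ) : ℚ) by push_cast; ring,
      ← hfib, hTcard, div_eq_div_iff (by positivity) (by positivity)]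
    push_cast
    ring
  · -- column sums
    intro v hv
    set S := Finset.univ.filter
      (fun x : {x // x ∈ W0 X σ c} × Fin b => ((G x).1.1 : Fin d → ℝ) = v) with hSdef
    have hScard : S.card = a := by
      have hbij2 : S.card = ({(⟨v, hv⟩ : {x // x ∈ W1 X σ c})} ×ˢ
          (Finset.univ : Finset (Fin a))).card := by
        apply Finset.card_bij (fun x _ => G x)
        · intro x hx
          rw [hSdef] at hx
          rw [Finset.mem_filter] at hx
          rw [Finset.mem_product, Finset.mem_singleton]
          exact ⟨Subtype.ext hx.2, Finset.mem_univ _⟩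
        · intro x _ y _ hxy
          exact hGinj hxy
        · intro y hy
          obtain ⟨x, hx⟩ := hGbij.2 y
          refine ⟨x, ?_, hx⟩
          rw [hSdef, Finset.mem_filter]
          rw [Finset.mem_product, Finset.mem_singleton] at hy
          refine ⟨Finset.mem_univ _, ?_⟩
          rw [hx, hy.1]
      rw [hbij2, Finset.card_product, Finset.card_singleton, Finset.card_univ,
        Fintype.card_fin, one_mul]
    have hfib : S.card = ∑ u ∈ X, cnt u v := by
      rw [hcntdef]
      rw [Finset.card_eq_sum_card_fiberwise
        (f := fun x : {x // x ∈ W0 X σ c} × Fin b => (x.1.1 : Fin d → ℝ)) (t := X)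
        (fun x hx => W0_subset_X x.1.2)]
      apply Finset.sum_congr rfl
      intro u _
      rw [hSdef, Finset.filter_filter]
      congr 1
      ext x
      simp only [Finset.mem_filter]
      constructor
      · rintro ⟨hm, h1', h2'⟩; exact ⟨hm, h2', h1'⟩
      · rintro ⟨hm, h1', h2'⟩; exact ⟨hm, h2', h1'⟩
    rw [← Finset.sum_div,
      show (∑ u ∈ X, (cnt u v : ℚ)) = ((∑ u ∈ X, cnt u v : ℕ) : ℚ) by push_cast; ring,
      ← hfib, hScard, div_eq_div_iff (by positivity) (by positivity)]
    push_cast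
    ring
end FWM
/-- Every balanced, `ρ`-uniform 0/1-polytope `P ⊆ ℝ^d` has
fractional wall-matchings. -/
theorem hasFractionalWallMatchings_of_balanced_uniform {d : ℕ}
    (X : Finset (Fin d → ℝ)) (hX01 : IsZeroOne X) (hne : X.Nonempty) (ρ : ℕ)
    (huni : IsUniform X ρ) (hbal : IsBalancedPolytope X) :
    HasFractionalWallMatchings X := by

  intro W hW μ hμ
  obtain ⟨hWne, σ, hWσ⟩ := hW
  have hWcoe : W = ↑(FWM.WF X σ) := by rw [hWσ, FWM.coe_WF]
  obtain ⟨x, hxW, y, hyW, hxy⟩ := hμ.1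
  have hxF : x ∈ FWM.WF X σ := by rw [hWcoe] at hxW; exact_mod_cast hxW
  have hyF : y ∈ FWM.WF X σ := by rw [hWcoe] at hyW; exact_mod_cast hyW
  have hxX : x ∈ X := FWM.WF_subset hxF
  have hyX : y ∈ X := FWM.WF_subset hyF
  have h01 : (FWM.W0 X σ μ).Nonempty ∧ (FWM.W1 X σ μ).Nonempty := by
    rcases hX01 x hxX μ with hx0 | hx1 <;> rcases hX01 y hyX μ with hy0 | hy1
    · exact absurd (hx0.trans hy0.symm) hxy
    · exact ⟨⟨x, Finset.mem_filter.2 ⟨hxF, hx0⟩⟩, ⟨y, Finset.mem_filter.2 ⟨hyF, hy1⟩⟩⟩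
    · exact ⟨⟨y, Finset.mem_filter.2 ⟨hyF, hy0⟩⟩, ⟨x, Finset.mem_filter.2 ⟨hxF, hx1⟩⟩⟩
    · exact absurd (hx1.trans hy1.symm) hxy
  obtain ⟨h0, h1⟩ := h01
  obtain ⟨w, hw0, hwsupp, hwrow, hwcol⟩ := FWM.exists_matching hX01 huni hbal σ μ h0 h1
  have hn0 : ({x ∈ W | x μ = 0}.ncard : ℚ) = ((FWM.W0 X σ μ).card : ℚ) := by
    have hset : {x ∈ W | x μ = 0} = ↑(FWM.W0 X σ μ) := by
      rw [hWcoe]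
      ext z
      simp only [Set.mem_setOf_eq, Set.mem_sep_iff, Finset.mem_coe, Finset.mem_filter, FWM.W0]
    rw [hset, Set.ncard_coe_finset]
  have hn1 : ({x ∈ W | x μ = 1}.ncard : ℚ) = ((FWM.W1 X σ μ).card : ℚ) := by
    have hset : {x ∈ W | x μ = 1} = ↑(FWM.W1 X σ μ) := by
      rw [hWcoe]
      ext z
      simp only [Set.mem_setOf_eq, Set.mem_sep_iff, Finset.mem_coe, Finset.mem_filter, FWM.W1]
    rw [hset, Set.ncard_coe_finset]
  refine ⟨w, hw0, ?_, ?_, ?_⟩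
  · intro u v hwuv
    obtain ⟨hu0, hv1, j, hjc, huj, hvj, hagr⟩ := hwsupp u v hwuv
    have huX : u ∈ X := FWM.W0_subset_X hu0
    have hvX : v ∈ X := FWM.W1_subset_X hv1
    have huc : u μ = 0 := (Finset.mem_filter.1 hu0).2
    have hvc : v μ = 1 := (Finset.mem_filter.1 hv1).2
    refine ⟨FWM.exch_adj hX01 huni huX hvX hjc huc hvc huj hvj hagr, ?_, ?_, huc, hvc⟩
    · rw [hWcoe]
      exact_mod_cast (Finset.filter_subset _ _) hu0
    · rw [hWcoe]
      exact_mod_cast (Finset.filter_subset _ _) hv1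
  · intro u huW huμ
    have huF : u ∈ FWM.WF X σ := by rw [hWcoe] at huW; exact_mod_cast huW
    have hu0 : u ∈ FWM.W0 X σ μ := Finset.mem_filter.2 ⟨huF, huμ⟩
    rw [hwrow u hu0, hn0]
  · intro v hvW hvμ
    have hvF : v ∈ FWM.WF X σ := by rw [hWcoe] at hvW; exact_mod_cast hvW
    have hv1 : v ∈ FWM.W1 X σ μ := Finset.mem_filter.2 ⟨hvF, hvμ⟩
    rw [hwcol v hv1, hn1]
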